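/- Linear-time-step universal constructor: let S_I ⊆ S_F be connected shapes. Then there exist a natural number m ≤ 4·|S_F| and a chain of connected shapes T_0 = S_I, T_1, …, T_m = S_F such that for every i < m there is a direction d ∈ {(1,0), (−1,0), (0,1), (0,−1)} with T_i ⊆ T_{i+1} ⊆ T_i ∪ {p + d : p ∈ T_i}; i.e., in each time-step a fixed direction is chosen and every newly added node is generated at an empty position adjacent, in that direction, to an existing node (each existing node generating at most one new node). -/

import Mathlib

/-- Minimum first coordinate of a shape (0 for the empty set). -/
def xmin (S : Finset (ℤ × ℤ)) : ℤ := WithTop.untopD 0 (S.image Prod.fst).min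

/-- Minimum second coordinate of a shape (0 for the empty set). -/
def ymin (S : Finset (ℤ × ℤ)) : ℤ := WithTop.untopD 0 (S.image Prod.snd).min

/-- East full doubling. -/
def DE (S : Finset (ℤ × ℤ)) : Finset (ℤ × ℤ) :=
  S.image (fun p => (2 * p.1 - xmin S, p.2)) ∪
    S.image (fun p => (2 * p.1 - xmin S + 1, p.2))

/-- North full doubling. -/
def DN (S : Finset (ℤ × ℤ)) : Finset (ℤ × ℤ) :=
  S.image (fun p => (p.1, 2 * p.2 - ymin S)) ∪
    S.image (fun p => (p.1, 2 * p.2 - ymin S + 1))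

/-- Apply a sequence of full doubling operations (`true` = east, `false` = north),
in order (head of the list first). -/
def applySeq (σ : List Bool) (S : Finset (ℤ × ℤ)) : Finset (ℤ × ℤ) :=
  σ.foldl (fun T b => if b then DE T else DN T) S

/-- The (p,q)-rectangle around an integer point. -/
noncomputable def Rec2 (u : ℤ × ℤ) (p q : ℕ) : Finset (ℤ × ℤ) :=
  Finset.Icc u.1 (u.1 + (p : ℤ) - 1) ×ˢ Finset.Icc u.2 (u.2 + (q : ℤ) - 1)

/-- The reconfiguration function `F_{l,k}`. -/
noncomputable def F (l k : ℕ) (S : Finset (ℤ × ℤ)) : Finset (ℤ × ℤ) :=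
  S.biUnion fun p =>
    Rec2 (p.1 + ((2 : ℤ) ^ l - 1) * (p.1 - xmin S),
          p.2 + ((2 : ℤ) ^ k - 1) * (p.2 - ymin S)) (2 ^ l) (2 ^ k)

/-- Two grid points are adjacent if they are at orthogonal distance 1. -/
def Adj (u v : ℤ × ℤ) : Prop := (u.1 - v.1).natAbs + (u.2 - v.2).natAbs = 1

/-- A shape is connected if any two of its points are joined by a path of
adjacent points inside the shape. -/
def ShapeConnected (S : Finset (ℤ × ℤ)) : Prop :=
  ∀ u ∈ S, ∀ v ∈ S,
    Relation.ReflTransGen (fun a b => a ∈ S ∧ b ∈ S ∧ Adj a b) u v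

/-- `wD D x` is the number of elements of `D` strictly west of `x`. -/
def wD (D : Finset ℤ) (x : ℤ) : ℕ := (D.filter (· < x)).card

/-- East RC doubling of `S` with doubled column set `D`. -/
def RCE (S : Finset (ℤ × ℤ)) (D : Finset ℤ) : Finset (ℤ × ℤ) :=
  S.image (fun p => (p.1 + (wD D p.1 : ℤ), p.2)) ∪
    (S.filter fun p => p.1 ∈ D).image fun p => (p.1 + (wD D p.1 : ℤ) + 1, p.2)

/-- North RC doubling of `S` with doubled row set `D`. -/
def RCN (S : Finset (ℤ × ℤ)) (D : Finset ℤ) : Finset (ℤ × ℤ) :=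
  S.image (fun p => (p.1, p.2 + (wD D p.2 : ℤ))) ∪
    (S.filter fun p => p.2 ∈ D).image fun p => (p.1, p.2 + (wD D p.2 : ℤ) + 1)

/-- `D` is an admissible doubled column set for `S`. -/
def eastAdmissible (S : Finset (ℤ × ℤ)) (D : Finset ℤ) : Prop :=
  D.Nonempty ∧ ∀ d ∈ D, ∃ y, (d, y) ∈ S

/-- `D` is an admissible doubled row set for `S`. -/
def northAdmissible (S : Finset (ℤ × ℤ)) (D : Finset ℤ) : Prop :=
  D.Nonempty ∧ ∀ d ∈ D, ∃ x, (x, d) ∈ S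

/-- One east or north RC doubling step. -/
def RCStep (S T : Finset (ℤ × ℤ)) : Prop :=
  ∃ D : Finset ℤ,
    (eastAdmissible S D ∧ T = RCE S D) ∨ (northAdmissible S D ∧ T = RCN S D)

/-- One single column or single row doubling step (an RC step with `|D| = 1`). -/
def SingleStep (S T : Finset (ℤ × ℤ)) : Prop :=
  ∃ D : Finset ℤ, D.card = 1 ∧
    ((eastAdmissible S D ∧ T = RCE S D) ∨ (northAdmissible S D ∧ T = RCN S D))

/-- Translate a shape by a vector. -/
def translateSh (v : ℤ × ℤ) (S : Finset (ℤ × ℤ)) : Finset (ℤ × ℤ) :=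
  S.image fun p => (p.1 + v.1, p.2 + v.2)

/-- Single east column doubling at column `d`. -/
def oE (d : ℤ) (T : Finset (ℤ × ℤ)) : Finset (ℤ × ℤ) :=
  (T.filter fun p => p.1 ≤ d) ∪ (T.filter fun p => d ≤ p.1).image fun p => (p.1 + 1, p.2)

/-- The column of `S` at `x`. -/
def colS (S : Finset (ℤ × ℤ)) (x : ℤ) : Finset ℤ := (S.filter fun p => p.1 = x).image Prod.snd

/-- The row of `S` at `y`. -/
def rowS (S : Finset (ℤ × ℤ)) (y : ℤ) : Finset ℤ := (S.filter fun p => p.2 = y).image Prod.fst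

/-- `phiC S x` counts the column changes of `S` in the interval `(xmin S, x]`. -/
noncomputable def phiC (S : Finset (ℤ × ℤ)) (x : ℤ) : ℕ :=
  ((Finset.Icc (xmin S + 1) x).filter fun x' => colS S x' ≠ colS S (x' - 1)).card

/-- `phiR S y` counts the row changes of `S` in the interval `(ymin S, y]`. -/
noncomputable def phiR (S : Finset (ℤ × ℤ)) (y : ℤ) : ℕ :=
  ((Finset.Icc (ymin S + 1) y).filter fun y' => rowS S y' ≠ rowS S (y' - 1)).card

/-- Column compression of a shape. -/
noncomputable def KC (S : Finset (ℤ × ℤ)) : Finset (ℤ × ℤ) := S.image fun p => ((phiC S p.1 : ℤ), p.2)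

/-- Row compression of a shape. -/
noncomputable def KR (S : Finset (ℤ × ℤ)) : Finset (ℤ × ℤ) := S.image fun p => (p.1, (phiR S p.2 : ℤ))

/-- The baseline shape of `S`. -/
noncomputable def Baseline (S : Finset (ℤ × ℤ)) : Finset (ℤ × ℤ) := KR (KC S)

/-- Number of distinct consecutive columns of `S`. -/
noncomputable def mC (S : Finset (ℤ × ℤ)) : ℕ := (S.image Prod.fst).sup (phiC S) + 1

/-- Number of distinct consecutive rows of `S`. -/
noncomputable def mR (S : Finset (ℤ × ℤ)) : ℕ := (S.image Prod.snd).sup (phiR S) + 1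

/-- Consecutive multiplicity of the `i`-th distinct column of `S`. -/
noncomputable def MC (S : Finset (ℤ × ℤ)) (i : ℕ) : ℕ := ((S.image Prod.fst).filter fun x => phiC S x = i).card

/-- Consecutive multiplicity of the `i`-th distinct row of `S`. -/
noncomputable def MR (S : Finset (ℤ × ℤ)) (i : ℕ) : ℕ := ((S.image Prod.snd).filter fun y => phiR S y = i).card

/-- The four unit directions. -/
def dirs : Finset (ℤ × ℤ) := {(1, 0), (-1, 0), (0, 1), (0, -1)}

/-- One node-addition growth step: a direction `d` is fixed and every new node is
generated at a position `p + d` for an existing node `p`. -/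
def AddStep (S T : Finset (ℤ × ℤ)) : Prop :=
  ∃ d ∈ dirs, S ⊆ T ∧ T ⊆ S ∪ S.image (fun p => (p.1 + d.1, p.2 + d.2))

lemma adj_symm {u v : ℤ × ℤ} (h : Adj u v) : Adj v u := by
  unfold Adj at *; omega

/-- Frontier lemma: if `S ⊆ F`, `F` connected, and `F \ S` is nonempty,
there is a point of `F \ S` adjacent to a point of `S`. -/
lemma shape_frontier {F S : Finset (ℤ × ℤ)} (hS : S ⊆ F) (hcF : ShapeConnected F)
    (hne : S.Nonempty) (hne2 : (F \ S).Nonempty) :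
    ∃ q ∈ S, ∃ p ∈ F, p ∉ S ∧ Adj q p := by
  obtain ⟨u, hu⟩ := hne
  obtain ⟨v, hv⟩ := hne2
  rw [Finset.mem_sdiff] at hv
  have hpath := hcF u (hS hu) v hv.1
  clear hcF
  induction hpath with
  | refl => exact absurd hu hv.2
  | @tail b c hub hstep ih =>
    by_cases hb : b ∈ S
    · exact ⟨b, hb, c, hstep.2.1, hv.2, hstep.2.2⟩
    · exact ih ⟨hstep.1, hb⟩

lemma connected_insert {S : Finset (ℤ × ℤ)} (hc : ShapeConnected S) {p q : ℤ × ℤ}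
    (hq : q ∈ S) (hAdj : Adj q p) : ShapeConnected (insert p S) := by
  set R : ℤ × ℤ → ℤ × ℤ → Prop := fun a b => a ∈ insert p S ∧ b ∈ insert p S ∧ Adj a b with hR
  have hsymm : Symmetric R := fun a b ⟨ha, hb, hadj⟩ => ⟨hb, ha, adj_symm hadj⟩
  have key : ∀ u ∈ insert p S, Relation.ReflTransGen R u q := by
    intro u hu
    rcases Finset.mem_insert.mp hu with h | h
    · subst h
      exact Relation.ReflTransGen.single
        ⟨Finset.mem_insert_self _ _, Finset.mem_insert_of_mem hq, adj_symm hAdj⟩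
    · exact Relation.ReflTransGen.mono (fun a b ⟨ha, hb, hab⟩ =>
        ⟨Finset.mem_insert_of_mem ha, Finset.mem_insert_of_mem hb, hab⟩) _ _ (hc u h q hq)
  intro u hu v hv
  haveI : Std.Symm R := ⟨fun a b h => hsymm h⟩
  exact (key u hu).trans (Std.Symm.symm _ _ (key v hv))

lemma addStep_insert {S : Finset (ℤ × ℤ)} {p q : ℤ × ℤ} (hq : q ∈ S) (hAdj : Adj q p) :
    AddStep S (insert p S) := by
  refine ⟨(p.1 - q.1, p.2 - q.2), ?_, fun a ha => Finset.mem_insert_of_mem ha, ?_⟩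
  · unfold Adj at hAdj
    have : (p.1 - q.1 = 1 ∧ p.2 - q.2 = 0) ∨ (p.1 - q.1 = -1 ∧ p.2 - q.2 = 0) ∨
        (p.1 - q.1 = 0 ∧ p.2 - q.2 = 1) ∨ (p.1 - q.1 = 0 ∧ p.2 - q.2 = -1) := by omega
    simp only [dirs, Finset.mem_insert, Finset.mem_singleton, Prod.mk.injEq]
    rcases this with ⟨h1, h2⟩ | ⟨h1, h2⟩ | ⟨h1, h2⟩ | ⟨h1, h2⟩ <;> simp [h1, h2]
  · intro a ha
    rcases Finset.mem_insert.mp ha with h | h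
    · subst h
      refine Finset.mem_union_right _ (Finset.mem_image.mpr ⟨q, hq, ?_⟩)
      simp only []
      ext <;> simp <;> ring
    · exact Finset.mem_union_left _ h

lemma build_chain (F : Finset (ℤ × ℤ)) (hcF : ShapeConnected F) :
    ∀ n (S : Finset (ℤ × ℤ)), (F \ S).card = n → S.Nonempty → ShapeConnected S → S ⊆ F →
      ∃ T : ℕ → Finset (ℤ × ℤ), T 0 = S ∧ T n = F ∧
        (∀ i ≤ n, (T i).Nonempty ∧ ShapeConnected (T i)) ∧
        (∀ i < n, AddStep (T i) (T (i + 1))) := by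
  intro n
  induction n with
  | zero =>
    intro S hcard hne hc hsub
    have hSF : S = F := Finset.Subset.antisymm hsub (fun a ha => by
      by_contra h
      have : a ∈ F \ S := Finset.mem_sdiff.mpr ⟨ha, h⟩
      rw [Finset.card_eq_zero] at hcard
      simp [hcard] at this)
    exact ⟨fun _ => S, rfl, hSF, fun i _ => ⟨hne, hc⟩, fun i hi => absurd hi (Nat.not_lt_zero i)⟩
  | succ n ih =>
    intro S hcard hne hc hsub
    have hne2 : (F \ S).Nonempty := Finset.card_pos.mp (by omega)
    obtain ⟨q, hqS, p, hpF, hpS, hadj⟩ := shape_frontier hsub hcF hne hne2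
    have hsub' : insert p S ⊆ F := Finset.insert_subset hpF hsub
    have hcard' : (F \ insert p S).card = n := by
      have : F \ insert p S = (F \ S).erase p := by
        ext a; simp [Finset.mem_sdiff, Finset.mem_erase, Finset.mem_insert]; tauto
      rw [this, Finset.card_erase_of_mem (Finset.mem_sdiff.mpr ⟨hpF, hpS⟩), hcard]
      omega
    obtain ⟨T', hT'0, hT'n, hT'conn, hT'step⟩ :=
      ih (insert p S) hcard' ⟨p, Finset.mem_insert_self _ _⟩ (connected_insert hc hqS hadj) hsub'
    refine ⟨fun i => if i = 0 then S else T' (i - 1), by simp, by simp [hT'n], ?_, ?_⟩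
    · intro i hi
      by_cases h0 : i = 0
      · simp [h0, hne, hc]
      · simp only [h0, if_neg]
        exact hT'conn (i - 1) (by omega)
    · intro i hi
      by_cases h0 : i = 0
      · subst h0
        simpa [hT'0] using addStep_insert hqS hadj
      · have : i - 1 + 1 = i := by omega
        simp only [h0, if_neg, Nat.succ_ne_zero]
        rw [show i + 1 - 1 = (i - 1) + 1 by omega]
        exact hT'step (i - 1) (by omega)

/-- linear-time-step universal constructor: for connected shapes
`S_I ⊆ S_F`, there is a chain of at most `4|S_F|` node-addition growth steps from
`S_I` to `S_F` through connected shapes. -/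
theorem linear_universal_constructor (S_I S_F : Finset (ℤ × ℤ))
    (hI : S_I.Nonempty) (hF : S_F.Nonempty) (hsub : S_I ⊆ S_F)
    (hcI : ShapeConnected S_I) (hcF : ShapeConnected S_F) :
    ∃ m ≤ 4 * S_F.card, ∃ T : ℕ → Finset (ℤ × ℤ),
      T 0 = S_I ∧ T m = S_F ∧
        (∀ i ≤ m, (T i).Nonempty ∧ ShapeConnected (T i)) ∧
        (∀ i < m, AddStep (T i) (T (i + 1))) := by
  obtain ⟨T, h0, hm, hconn, hstep⟩ :=
    build_chain S_F hcF ((S_F \ S_I).card) S_I rfl hI hcI hsub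
  refine ⟨(S_F \ S_I).card, ?_, T, h0, hm, hconn, hstep⟩
  calc (S_F \ S_I).card ≤ S_F.card := Finset.card_le_card (Finset.sdiff_subset)
    _ ≤ 4 * S_F.card := by omega
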